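/- Let e be a positive integer. The number of pairs (x, y) of residues modulo 2^e satisfying the congruence x² ≡ y² (mod 2^e) is at most 4e · 2^e. -/

import Mathlib

private lemma aux_dvd_small_eq_zero {n d : ℤ} (h : n ∣ d) (hlt : |d| < n) : d = 0 := by
  by_contra h0
  have : n ≤ |d| := Int.le_of_dvd (abs_pos.mpr h0) ((dvd_abs n d).mpr h)
  omega

private lemma aux_card_filter_dvd (n d : ℕ) (_hd : 0 < d) :
    ((Finset.range n).filter (fun i => d ∣ i)).card ≤ (n - 1) / d + 1 := by
  classical
  have h : ((Finset.range n).filter (fun i => d ∣ i)).card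
      ≤ (Finset.range ((n - 1) / d + 1)).card := by
    apply Finset.card_le_card_of_injOn (fun i => i / d)
    · intro i hi
      simp only [Finset.mem_coe, Finset.mem_filter, Finset.mem_range] at hi ⊢
      have h1 : i ≤ n - 1 := by omega
      exact Nat.lt_succ_of_le (Nat.div_le_div_right h1)
    · intro a ha b hb hab
      simp only [Finset.coe_filter, Set.mem_setOf_eq, Finset.mem_range] at ha hb
      have ha2 := Nat.div_mul_cancel ha.2
      have hb2 := Nat.div_mul_cancel hb.2
      simp only at hab
      rw [← ha2, ← hb2, hab]
  simpa using h

private lemma aux_div (a b : ℕ) (ha : 0 < a) (hb : 0 < b) : (a * b - 1) / a = b - 1 := by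
  obtain ⟨c, rfl⟩ : ∃ c, b = c + 1 := ⟨b - 1, by omega⟩
  have h1 : a * (c + 1) = a * c + a := by ring
  have h2 : a * (c + 1) - 1 = (a - 1) + a * c := by omega
  rw [h2, Nat.add_mul_div_left _ _ ha, Nat.div_eq_of_lt (by omega)]
  omega

private lemma aux_geom (e : ℕ) : (∑ j ∈ Finset.range e, 2 ^ (j + 1)) + 2 = 2 ^ (e + 1) := by
  induction e with
  | zero => simp
  | succ n ih =>
    rw [Finset.sum_range_succ]
    have : (2:ℕ) ^ (n + 2) = 2 * 2 ^ (n + 1) := by ring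
    omega

/-- The number of pairs `(x, y)` of residues modulo `2^e` with `x² ≡ y² (mod 2^e)` is
at most `4e·2^e`. -/
theorem count_square_congruence_two (e : ℕ) (he : 1 ≤ e) :
    ((Finset.range (2 ^ e) ×ˢ Finset.range (2 ^ e)).filter
        (fun xy : ℕ × ℕ => ((2 : ℤ) ^ e ∣ (xy.1 : ℤ) ^ 2 - (xy.2 : ℤ) ^ 2))).card
      ≤ 4 * e * 2 ^ e := by
  classical
  set N : ℕ := 2 ^ e with hN
  set P : Finset (ℕ × ℕ) := Finset.range N ×ˢ Finset.range N with hP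
  set S : ℕ → Finset (ℕ × ℕ) := fun j =>
    P.filter (fun xy => ((2:ℤ) ^ j ∣ (xy.1 : ℤ) - xy.2) ∧ ((2:ℤ) ^ (e - j) ∣ (xy.1 : ℤ) + xy.2))
    with hS
  -- covering
  have hcover : (P.filter
      (fun xy : ℕ × ℕ => ((2 : ℤ) ^ e ∣ (xy.1 : ℤ) ^ 2 - (xy.2 : ℤ) ^ 2)))
      ⊆ (Finset.range (e + 1)).biUnion S := by
    intro xy hxy
    obtain ⟨x, y⟩ := xy
    simp only [Finset.mem_filter] at hxy
    obtain ⟨hmem, hdvd⟩ := hxy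
    have hfac : (2:ℤ) ^ e ∣ ((x:ℤ) - y) * ((x:ℤ) + y) := by
      have h : (x:ℤ) ^ 2 - (y:ℤ) ^ 2 = ((x:ℤ) - y) * ((x:ℤ) + y) := by ring
      rwa [h] at hdvd
    set j := Nat.findGreatest (fun j => (2:ℤ) ^ j ∣ (x:ℤ) - y) e with hj
    have hjle : j ≤ e := Nat.findGreatest_le e
    have hjd : (2:ℤ) ^ j ∣ (x:ℤ) - y :=
      Nat.findGreatest_spec (P := fun j => (2:ℤ) ^ j ∣ (x:ℤ) - y) (Nat.zero_le e) (by simp)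
    have hsecond : (2:ℤ) ^ (e - j) ∣ (x:ℤ) + y := by
      rcases eq_or_lt_of_le hjle with heq | hlt
      · rw [heq, Nat.sub_self]; simp
      · have hnd : ¬ ((2:ℤ) ^ (j + 1) ∣ (x:ℤ) - y) :=
          Nat.findGreatest_is_greatest (Nat.lt_succ_self j) hlt
        obtain ⟨m, hm⟩ := hjd
        have hmodd : ¬ ((2:ℤ) ∣ m) := by
          rintro ⟨c, hc⟩
          exact hnd ⟨c, by rw [hm, hc]; ring⟩
        have h1 : (2:ℤ) ^ j * 2 ^ (e - j) ∣ (2:ℤ) ^ j * (m * ((x:ℤ) + y)) := by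
          rw [← pow_add]
          have hje : j + (e - j) = e := by omega
          rw [hje]
          have : ((x:ℤ) - y) * ((x:ℤ) + y) = 2 ^ j * (m * ((x:ℤ) + y)) := by
            rw [hm]; ring
          rwa [this] at hfac
        have h2 : (2:ℤ) ^ (e - j) ∣ m * ((x:ℤ) + y) :=
          (mul_dvd_mul_iff_left (pow_ne_zero j two_ne_zero)).mp h1
        have hcop : IsCoprime ((2:ℤ) ^ (e - j)) m := by
          apply IsCoprime.pow_left
          rw [Int.isCoprime_iff_gcd_eq_one]
          have hna : ¬ (2 ∣ m.natAbs) := by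
            intro h
            exact hmodd (Int.natAbs_dvd_natAbs.mp (by simpa using h))
          have := (Nat.Prime.coprime_iff_not_dvd Nat.prime_two).mpr hna
          simpa [Int.gcd] using this
        exact hcop.dvd_of_dvd_mul_left h2
    simp only [Finset.mem_biUnion, Finset.mem_range, hS, Finset.mem_filter]
    exact ⟨j, Nat.lt_succ_of_le hjle, hmem, hjd, hsecond⟩
  -- bound for S e
  have hSe : (S e).card ≤ N := by
    have h : (S e).card ≤ (Finset.range N).card := by
      apply Finset.card_le_card_of_injOn (fun xy => xy.1)
      · intro a ha
        simp only [Finset.mem_coe, hS, Finset.mem_filter, hP, Finset.mem_product, Finset.mem_range] at ha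
        simpa using ha.1.1
      · intro a ha b hb hab
        simp only [Finset.mem_coe, hS, Finset.mem_filter, hP, Finset.mem_product,
          Finset.mem_range] at ha hb
        have key : ∀ c : ℕ × ℕ, c.1 < N → c.2 < N → ((2:ℤ) ^ e ∣ (c.1 : ℤ) - c.2) →
            c.1 = c.2 := by
          intro c h1 h2 h3
          have h0 : ((c.1 : ℤ) - c.2) = 0 := by
            apply aux_dvd_small_eq_zero h3
            have hc1 : (c.1 : ℤ) < (N : ℤ) := by exact_mod_cast h1
            have hc2 : (c.2 : ℤ) < (N : ℤ) := by exact_mod_cast h2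
            have hNe : ((N : ℕ) : ℤ) = 2 ^ e := by push_cast [hN]; ring
            rw [abs_sub_lt_iff]
            constructor <;> [skip; skip] <;> omega
          omega
        have ha' := key a ha.1.1 ha.1.2 ha.2.1
        have hb' := key b hb.1.1 hb.1.2 hb.2.1
        have : a.1 = b.1 := hab
        exact Prod.ext this (by omega)
    simpa using h
  -- bound for S j, j < e
  have hSj : ∀ j, j < e → (S j).card ≤ 2 ^ (e + 2) - 2 ^ (j + 1) := by
    intro j hjlt
    set A : Finset ℕ := (Finset.range (2 ^ (e + 1))).filter (fun s => 2 ^ (e - j) ∣ s) with hA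
    set B : Finset ℕ :=
      (Finset.range (2 ^ (e + 1) - 2 ^ (j + 1) + 1)).filter (fun t => 2 ^ j ∣ t) with hB
    have hinj : (S j).card ≤ (A ×ˢ B).card := by
      apply Finset.card_le_card_of_injOn
        (fun xy => (xy.1 + xy.2, ((xy.1 : ℤ) - xy.2 + 2 ^ e - 2 ^ j).toNat))
      · rintro ⟨x, y⟩ hxy
        simp only [Finset.mem_coe, hS, Finset.mem_filter, hP, Finset.mem_product, Finset.mem_range] at hxy
        obtain ⟨⟨hx, hy⟩, hd1, hd2⟩ := hxy
        have hxZ : (x:ℤ) < 2 ^ e := by exact_mod_cast hx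
        have hyZ : (y:ℤ) < 2 ^ e := by exact_mod_cast hy
        set d : ℤ := (x:ℤ) - y with hdd
        have hdvd2 : (2:ℤ) ^ j ∣ d + 2 ^ e - 2 ^ j := by
          apply dvd_sub
          · exact dvd_add hd1 (pow_dvd_pow 2 (le_of_lt hjlt))
          · exact dvd_rfl
        have hnonneg : 0 ≤ d + 2 ^ e - 2 ^ j := by
          by_contra hneg
          push_neg at hneg
          have hdp : (0:ℤ) < d + 2 ^ e := by
            have : (0:ℤ) ≤ (x:ℤ) := Int.natCast_nonneg x
            omega
          have h0 := aux_dvd_small_eq_zero hdvd2 (by rw [abs_of_neg hneg]; omega)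
          omega
        have hub : d ≤ 2 ^ e - 2 ^ j := by
          have hdvd3 : (2:ℤ) ^ j ∣ 2 ^ e - d := by
            exact dvd_sub (pow_dvd_pow 2 (le_of_lt hjlt)) hd1
          have hpos : (0:ℤ) < 2 ^ e - d := by
            have : (0:ℤ) ≤ (y:ℤ) := Int.natCast_nonneg y
            omega
          have := Int.le_of_dvd hpos hdvd3
          omega
        simp only [Finset.mem_coe, Finset.mem_product, hA, hB, Finset.mem_filter, Finset.mem_range]
        refine ⟨⟨?_, ?_⟩, ?_, ?_⟩
        · have : (2:ℕ) ^ (e + 1) = 2 ^ e + 2 ^ e := by ring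
          omega
        · -- 2^(e-j) ∣ x + y
          have : ((2:ℕ) ^ (e - j) : ℤ) ∣ ((x + y : ℕ) : ℤ) := by push_cast; exact hd2
          exact_mod_cast this
        · -- toNat < bound
          have h2j : ((2:ℕ) ^ (e + 1) - 2 ^ (j + 1) + 1 : ℕ) =
              (2 ^ (e + 1) + 1) - 2 ^ (j + 1) := by
            have : (2:ℕ) ^ (j + 1) ≤ 2 ^ (e + 1) := Nat.pow_le_pow_right (by norm_num) (by omega)
            omega
          have hZ : d + 2 ^ e - 2 ^ j ≤ 2 ^ (e + 1) - 2 ^ (j + 1) := by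
            have h1 : (2:ℤ) ^ (e + 1) = 2 ^ e + 2 ^ e := by ring
            have h2 : (2:ℤ) ^ (j + 1) = 2 ^ j + 2 ^ j := by ring
            omega
          have htn : (((d + 2 ^ e - 2 ^ j).toNat : ℤ)) = d + 2 ^ e - 2 ^ j :=
            Int.toNat_of_nonneg hnonneg
          have hc1 : ((2:ℕ) ^ (e + 1) : ℤ) = 2 ^ (e + 1) := by push_cast; ring
          have hc2 : ((2:ℕ) ^ (j + 1) : ℤ) = 2 ^ (j + 1) := by push_cast; ring
          have hle2 : (2:ℕ) ^ (j + 1) ≤ 2 ^ (e + 1) :=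
            Nat.pow_le_pow_right (by norm_num) (by omega)
          zify [hle2]
          omega
        · -- 2^j ∣ toNat
          have htn : (((d + 2 ^ e - 2 ^ j).toNat : ℤ)) = d + 2 ^ e - 2 ^ j :=
            Int.toNat_of_nonneg hnonneg
          have : ((2:ℕ) ^ j : ℤ) ∣ (((d + 2 ^ e - 2 ^ j).toNat : ℤ)) := by
            rw [htn]; push_cast; exact hdvd2
          exact Int.natCast_dvd_natCast.mp this
      · rintro ⟨x, y⟩ hxy ⟨x', y'⟩ hxy' heq
        simp only [Finset.mem_coe, hS, Finset.mem_filter, hP, Finset.mem_product,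
          Finset.mem_range] at hxy hxy'
        obtain ⟨⟨hx, hy⟩, hd1, -⟩ := hxy
        obtain ⟨⟨hx', hy'⟩, hd1', -⟩ := hxy'
        have h1 : x + y = x' + y' := congrArg Prod.fst heq
        have h2 : ((x:ℤ) - y + 2 ^ e - 2 ^ j).toNat =
            ((x':ℤ) - y' + 2 ^ e - 2 ^ j).toNat := congrArg Prod.snd heq
        -- nonnegativity of both to conclude equality of the integers
        have key : ∀ a b : ℕ, a < N → b < N → ((2:ℤ) ^ j ∣ (a:ℤ) - b) →
            0 ≤ (a:ℤ) - b + 2 ^ e - 2 ^ j := by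
          intro a b ha hb hdab
          have hdvd2 : (2:ℤ) ^ j ∣ (a:ℤ) - b + 2 ^ e - 2 ^ j := by
            apply dvd_sub
            · exact dvd_add hdab (pow_dvd_pow 2 (le_of_lt hjlt))
            · exact dvd_rfl
          by_contra hneg
          push_neg at hneg
          have hbZ : (b:ℤ) < 2 ^ e := by
            have := hb; rw [hN] at this
            exact_mod_cast this
          have hdp : (0:ℤ) < (a:ℤ) - b + 2 ^ e := by
            have : (0:ℤ) ≤ (a:ℤ) := Int.natCast_nonneg a
            omega
          have h0 := aux_dvd_small_eq_zero hdvd2 (by rw [abs_of_neg hneg]; omega)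
          omega
        have hnn := key x y hx hy hd1
        have hnn' := key x' y' hx' hy' hd1'
        have h2' : (x:ℤ) - y + 2 ^ e - 2 ^ j = (x':ℤ) - y' + 2 ^ e - 2 ^ j := by
          rw [← Int.toNat_of_nonneg hnn, ← Int.toNat_of_nonneg hnn']
          exact_mod_cast h2
        have h1' : (x:ℤ) + y = (x':ℤ) + y' := by exact_mod_cast h1
        have hx0 : (x:ℤ) = x' := by omega
        have hy0 : (y:ℤ) = y' := by omega
        exact Prod.ext (by exact_mod_cast hx0) (by exact_mod_cast hy0)
    -- card of A and B
    have hAcard : A.card ≤ 2 ^ (j + 1) := by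
      have h := aux_card_filter_dvd (2 ^ (e + 1)) (2 ^ (e - j)) (pow_pos (by norm_num) _)
      have heq : ((2:ℕ) ^ (e + 1) - 1) / 2 ^ (e - j) = 2 ^ (j + 1) - 1 := by
        have hmul : (2:ℕ) ^ (e - j) * 2 ^ (j + 1) = 2 ^ (e + 1) := by
          rw [← pow_add]
          congr 1
          omega
        rw [← hmul]
        exact aux_div _ _ (pow_pos (by norm_num) _) (pow_pos (by norm_num) _)
      rw [heq] at h
      have : (2:ℕ) ^ (j + 1) - 1 + 1 = 2 ^ (j + 1) := by
        have := pow_pos (show (0:ℕ) < 2 by norm_num) (j + 1)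
        omega
      rw [this] at h
      exact h
    have hBcard : B.card ≤ 2 ^ (e + 1 - j) - 1 := by
      have h := aux_card_filter_dvd (2 ^ (e + 1) - 2 ^ (j + 1) + 1) (2 ^ j)
        (pow_pos (by norm_num) _)
      have heq : ((2:ℕ) ^ (e + 1) - 2 ^ (j + 1) + 1 - 1) / 2 ^ j = 2 ^ (e + 1 - j) - 2 := by
        have h0 : (2:ℕ) ^ (e + 1) - 2 ^ (j + 1) + 1 - 1 = 2 ^ (e + 1) - 2 ^ (j + 1) := by omega
        have hmul : (2:ℕ) ^ (e + 1) - 2 ^ (j + 1) = 2 ^ j * (2 ^ (e + 1 - j) - 2) := by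
          rw [Nat.mul_sub, ← pow_add, ← pow_succ]
          have hje : j + (e + 1 - j) = e + 1 := by omega
          rw [hje]
        rw [h0, hmul, Nat.mul_div_cancel_left _ (pow_pos (by norm_num) _)]
      rw [heq] at h
      have h2 : (2:ℕ) ≤ 2 ^ (e + 1 - j) := by
        have h1j : (1:ℕ) ≤ e + 1 - j := by omega
        calc (2:ℕ) = 2 ^ 1 := by norm_num
        _ ≤ 2 ^ (e + 1 - j) := Nat.pow_le_pow_right (by norm_num) h1j
      have heq2 : (2:ℕ) ^ (e + 1 - j) - 2 + 1 = 2 ^ (e + 1 - j) - 1 := by omega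
      rw [heq2] at h
      exact h
    have hprod : (A ×ˢ B).card ≤ 2 ^ (j + 1) * (2 ^ (e + 1 - j) - 1) := by
      rw [Finset.card_product]
      exact Nat.mul_le_mul hAcard hBcard
    have hfinal : (2:ℕ) ^ (j + 1) * (2 ^ (e + 1 - j) - 1) = 2 ^ (e + 2) - 2 ^ (j + 1) := by
      rw [Nat.mul_sub, Nat.mul_one, ← pow_add]
      congr 2
      omega
    calc (S j).card ≤ (A ×ˢ B).card := hinj
      _ ≤ 2 ^ (j + 1) * (2 ^ (e + 1 - j) - 1) := hprod
      _ = 2 ^ (e + 2) - 2 ^ (j + 1) := hfinal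
  -- assemble
  have hcard : (P.filter
        (fun xy : ℕ × ℕ => ((2 : ℤ) ^ e ∣ (xy.1 : ℤ) ^ 2 - (xy.2 : ℤ) ^ 2))).card
      ≤ ∑ j ∈ Finset.range (e + 1), (S j).card :=
    le_trans (Finset.card_le_card hcover) (Finset.card_biUnion_le)
  rw [Finset.sum_range_succ] at hcard
  have hsum : ∑ j ∈ Finset.range e, (S j).card
      ≤ ∑ j ∈ Finset.range e, (2 ^ (e + 2) - 2 ^ (j + 1)) :=
    Finset.sum_le_sum (fun j hj => hSj j (Finset.mem_range.mp hj))
  have hsum2 : (∑ j ∈ Finset.range e, ((2:ℕ) ^ (e + 2) - 2 ^ (j + 1)))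
      + (∑ j ∈ Finset.range e, (2:ℕ) ^ (j + 1)) = e * 2 ^ (e + 2) := by
    rw [← Finset.sum_add_distrib]
    have : ∀ j ∈ Finset.range e, (2:ℕ) ^ (e + 2) - 2 ^ (j + 1) + 2 ^ (j + 1) = 2 ^ (e + 2) := by
      intro j hj
      have : (2:ℕ) ^ (j + 1) ≤ 2 ^ (e + 2) :=
        Nat.pow_le_pow_right (by norm_num) (by simp at hj; omega)
      omega
    rw [Finset.sum_congr rfl this, Finset.sum_const, Finset.card_range, smul_eq_mul]
  have hgeom := aux_geom e
  have hA2 : (2:ℕ) ^ (e + 1) = 2 * 2 ^ e := by ring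
  have hM : e * 2 ^ (e + 2) = 4 * (e * 2 ^ e) := by ring
  have hNge : (2:ℕ) ≤ 2 ^ e := by
    calc (2:ℕ) = 2 ^ 1 := by norm_num
    _ ≤ 2 ^ e := Nat.pow_le_pow_right (by norm_num) he
  have hgoal : 4 * e * 2 ^ e = 4 * (e * 2 ^ e) := by ring
  rw [hgoal]
  rw [hM] at hsum2
  set T := ∑ j ∈ Finset.range e, (2:ℕ) ^ (j + 1) with hT
  set U := ∑ j ∈ Finset.range e, ((2:ℕ) ^ (e + 2) - 2 ^ (j + 1)) with hU
  set M := e * 2 ^ e with hMdef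
  -- card ≤ U + (S e).card ≤ U + N ; U + T = 4M ; T + 2 = 2^{e+1} = 2*2^e ; 2 ≤ 2^e
  have h1 : (P.filter
        (fun xy : ℕ × ℕ => ((2 : ℤ) ^ e ∣ (xy.1 : ℤ) ^ 2 - (xy.2 : ℤ) ^ 2))).card
      ≤ U + N := by
    calc _ ≤ (∑ j ∈ Finset.range e, (S j).card) + (S e).card := hcard
      _ ≤ U + N := Nat.add_le_add hsum hSe
  have hNN : N = 2 ^ e := hN
  omega
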